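/- Let G ⊆ [-∞,∞]^X be a proper, point-separating complete subspace and let Ḡ_inf denote its inf-closure (the set of arbitrary pointwise infima of families in G). Then Ḡ_inf = { inf_{x ∈ X} (e_x + w_x) | w_x ∈ [-∞,∞] } and for every x, e_x = sup{ u ∈ Ḡ_inf | u(x) < 0 }, where e_x = sup{u ∈ G | u(x) ≤ 0}. -/

import Mathlib

open scoped Classical

/-- `G` is stable under arbitrary pointwise suprema. -/
def SupStable {X : Type*} (G : Set (X → EReal)) : Prop :=
  ∀ S : Set (X → EReal), S ⊆ G → (fun x => ⨆ f ∈ S, f x) ∈ G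

/-- A complete subspace: stable under arbitrary suprema and addition of real scalars. -/
def CompleteSubspace {X : Type*} (G : Set (X → EReal)) : Prop :=
  SupStable G ∧ ∀ g ∈ G, ∀ l : ℝ, (fun x => g x + (l : EReal)) ∈ G

/-- `G` is proper: at every point some function of `G` takes a finite value. -/
def ProperAt {X : Type*} (G : Set (X → EReal)) : Prop :=
  ∀ x : X, ∃ g ∈ G, g x ≠ ⊤ ∧ g x ≠ ⊥

/-- `G` is point separating. -/
def Separating {X : Type*} (G : Set (X → EReal)) : Prop :=
  ∀ x x' : X, x ≠ x' → ∃ g₁ ∈ G, ∃ g₂ ∈ G, ∃ a₁ b₁ a₂ b₂ : ℝ,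
    g₁ x = (a₁ : EReal) ∧ g₁ x' = (b₁ : EReal) ∧ g₂ x = (a₂ : EReal) ∧ g₂ x' = (b₂ : EReal) ∧
    a₁ - b₁ ≠ a₂ - b₂

/-- `e_x = sup { u ∈ G | u(x) ≤ 0 }`. -/
noncomputable def eFun {X : Type*} (G : Set (X → EReal)) (x : X) : X → EReal :=
  fun z => ⨆ u ∈ {u | u ∈ G ∧ u x ≤ 0}, u z

/-- Addition on `EReal` with `+∞` absorbing. -/
noncomputable def tadd (a b : EReal) : EReal := if a = ⊤ ∨ b = ⊤ then ⊤ else a + b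

/-- The inf-closure of `G`: arbitrary pointwise infima of families in `G`. -/
def infClos {X : Type*} (G : Set (X → EReal)) : Set (X → EReal) :=
  {f | ∃ S : Set (X → EReal), S ⊆ G ∧ f = fun x => ⨅ g ∈ S, g x}


lemma ereal3 (a : EReal) : a = ⊤ ∨ a = ⊥ ∨ ∃ r : ℝ, a = r := by
  induction a using EReal.rec with
  | bot => exact Or.inr (Or.inl rfl)
  | coe r => exact Or.inr (Or.inr ⟨r, rfl⟩)
  | top => exact Or.inl rfl

lemma tadd_top (a : EReal) : tadd a ⊤ = ⊤ := if_pos (Or.inr rfl)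
lemma top_tadd (b : EReal) : tadd ⊤ b = ⊤ := if_pos (Or.inl rfl)

lemma tadd_coe (a : EReal) (r : ℝ) : tadd a (r : EReal) = a + r := by
  unfold tadd
  split_ifs with h
  · rcases h with h | h
    · rw [h, EReal.top_add_coe]
    · exact absurd h (EReal.coe_ne_top r)
  · rfl

lemma tadd_zero (a : EReal) : tadd a 0 = a := by
  rw [← EReal.coe_zero, tadd_coe, EReal.coe_zero, add_zero]

lemma zero_tadd (b : EReal) : tadd 0 b = b := by
  unfold tadd
  split_ifs with h
  · rcases h with h | h
    · exact absurd h (by simp)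
    · rw [h]
  · rw [zero_add]

lemma tadd_mono_right (a : EReal) {b c : EReal} (h : b ≤ c) : tadd a b ≤ tadd a c := by
  unfold tadd
  split_ifs with h1 h2
  · exact le_refl _
  · rcases h1 with h1 | h1
    · exact absurd (Or.inl h1) h2
    · exact absurd (Or.inr (top_le_iff.1 (h1 ▸ h))) h2
  · exact le_top
  · exact add_le_add_right h a

lemma cancel_aux (a : EReal) (r : ℝ) : (a + (r : EReal)) + ((-r : ℝ) : EReal) = a := by
  rw [add_assoc, ← EReal.coe_add]
  norm_num

lemma iInf_tadd_le {ι : Sort*} (a : EReal) (b : ι → EReal) :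
    (⨅ i, tadd a (b i)) ≤ tadd a (⨅ i, b i) := by
  rcases ereal3 a with ha | ha | ⟨r, ha⟩
  · rw [ha, top_tadd]; exact le_top
  · by_cases hb : (⨅ i, b i) = ⊤
    · rw [hb, tadd_top]; exact le_top
    · rw [iInf_eq_top] at hb
      push_neg at hb
      obtain ⟨i, hi⟩ := hb
      have hbot : tadd a (b i) = ⊥ := by
        unfold tadd
        rw [if_neg (by rw [ha]; simp [hi]), ha, EReal.bot_add]
      exact le_trans (iInf_le _ i) (hbot ▸ bot_le)
  · subst ha
    have ht : ∀ b' : EReal, tadd (r : EReal) b' = (r : EReal) + b' := by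
      intro b'
      unfold tadd
      split_ifs with h
      · rcases h with h | h
        · exact absurd h (EReal.coe_ne_top r)
        · rw [h, EReal.coe_add_top]
      · rfl
    simp_rw [ht]
    have h2 : (⨅ j, ((r : EReal) + b j)) + ((-r : ℝ) : EReal) ≤ ⨅ i, b i := by
      refine le_iInf fun i => ?_
      have := add_le_add_left (iInf_le (fun j => (r : EReal) + b j) i) ((-r : ℝ) : EReal)
      refine this.trans_eq ?_
      rw [add_comm (r : EReal) (b i), cancel_aux]
    calc (⨅ j, ((r : EReal) + b j))
        = ((⨅ j, ((r : EReal) + b j)) + ((-r : ℝ) : EReal)) + (r : EReal) := by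
          have := cancel_aux (⨅ j, ((r : EReal) + b j)) (-r)
          rw [neg_neg] at this
          rw [this]
      _ ≤ (⨅ i, b i) + (r : EReal) := add_le_add_left h2 _
      _ = (r : EReal) + ⨅ i, b i := add_comm _ _

section efun
variable {X : Type*} {G : Set (X → EReal)}

lemma le_eFun {u : X → EReal} {x : X} (hu : u ∈ G) (hux : u x ≤ 0) (z : X) :
    u z ≤ eFun G x z :=
  le_iSup₂_of_le u ⟨hu, hux⟩ le_rfl

lemma eFun_mem (hG : CompleteSubspace G) (x : X) : eFun G x ∈ G :=
  hG.1 {u | u ∈ G ∧ u x ≤ 0} (fun _ hu => hu.1)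

lemma eFun_self (hG : CompleteSubspace G) (hprop : ProperAt G) (x : X) :
    eFun G x x = 0 := by
  apply le_antisymm
  · exact iSup₂_le fun u hu => hu.2
  · obtain ⟨g, hg, ht, hb⟩ := hprop x
    rcases ereal3 (g x) with h | h | ⟨r, hr⟩
    · exact absurd h ht
    · exact absurd h hb
    · set u : X → EReal := fun y => g y + ((-r : ℝ) : EReal) with hu
      have hmem : u ∈ G := hG.2 g hg (-r)
      have hux : u x = 0 := by
        simp only [hu, hr, ← EReal.coe_add]
        norm_num
      calc (0 : EReal) = u x := hux.symm
        _ ≤ eFun G x x := le_eFun hmem (le_of_eq hux) x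

lemma mem_le_tadd (hG : CompleteSubspace G) {g : X → EReal} (hg : g ∈ G) (x y : X) :
    g y ≤ tadd (eFun G x y) (g x) := by
  rcases ereal3 (g x) with h | h | ⟨r, hr⟩
  · rw [h, tadd_top]; exact le_top
  · -- g x = ⊥
    have key : ∀ l : ℝ, g y + (l : EReal) ≤ eFun G x y := by
      intro l
      refine le_eFun (hG.2 g hg l) ?_ y
      show g x + (l : EReal) ≤ 0
      rw [h, EReal.bot_add]
      exact bot_le
    by_cases he : eFun G x y = ⊤
    · rw [he, top_tadd]; exact le_top
    · have hgy : g y = ⊥ := by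
        by_contra hgy
        apply he
        rw [EReal.eq_top_iff_forall_lt]
        intro t
        rcases ereal3 (g y) with h' | h' | ⟨s, hs⟩
        · have := key 0
          rw [h', EReal.top_add_coe] at this
          exact lt_of_lt_of_le (EReal.coe_lt_top t) this
        · exact absurd h' hgy
        · have := key (t - s + 1)
          rw [hs, ← EReal.coe_add] at this
          refine lt_of_lt_of_le ?_ this
          rw [EReal.coe_lt_coe_iff]
          linarith
      rw [hgy]
      exact bot_le
  · -- g x = r
    set u : X → EReal := fun y => g y + ((-r : ℝ) : EReal) with hu
    have hmem : u ∈ G := hG.2 g hg (-r)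
    have hux : u x ≤ 0 := by
      simp only [hu, hr, ← EReal.coe_add]
      norm_num
    have h1 : u y ≤ eFun G x y := le_eFun hmem hux y
    have h2 : g y = u y + (r : EReal) := by
      have := cancel_aux (g y) (-r)
      rw [neg_neg] at this
      rw [hu]
      exact this.symm
    rw [hr, tadd_coe, h2]
    exact add_le_add_left h1 _

lemma infClos_le_tadd (hG : CompleteSubspace G) {f : X → EReal} (hf : f ∈ infClos G)
    (x y : X) : f y ≤ tadd (eFun G x y) (f x) := by
  obtain ⟨S, hS, rfl⟩ := hf
  calc (⨅ g ∈ S, g y) ≤ ⨅ g ∈ S, tadd (eFun G x y) (g x) :=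
        le_iInf₂ fun g hg => (iInf₂_le g hg).trans (mem_le_tadd hG (hS hg) x y)
    _ ≤ ⨅ g, tadd (eFun G x y) (⨅ _ : g ∈ S, g x) :=
        le_iInf fun g => (iInf_le _ g).trans (iInf_tadd_le _ _)
    _ ≤ tadd (eFun G x y) (⨅ g ∈ S, g x) := iInf_tadd_le _ _

lemma mem_infClos_of_mem {g : X → EReal} (hg : g ∈ G) : g ∈ infClos G := by
  refine ⟨{g}, by simpa using hg, ?_⟩
  funext z
  simp

end efun

theorem stmt6 {X : Type*} [Nonempty X] (G : Set (X → EReal)) (hG : CompleteSubspace G)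
    (hprop : ProperAt G) (hsep : Separating G) :
    infClos G =
      {f | ∃ w : X → EReal, f = fun y => ⨅ x, tadd (eFun G x y) (w x)} ∧
    ∀ x, eFun G x = fun z => ⨆ u ∈ {u | u ∈ infClos G ∧ u x < 0}, u z := by
  constructor
  · ext f
    constructor
    · intro hf
      refine ⟨f, funext fun y => le_antisymm ?_ ?_⟩
      · exact le_iInf fun x => infClos_le_tadd hG hf x y
      · refine iInf_le_of_le y ?_
        rw [eFun_self hG hprop y, zero_tadd]
    · rintro ⟨w, rfl⟩
      set S : Set (X → EReal) :=
        {g | ∃ x : X, ∃ l : ℝ, w x ≤ (l : EReal) ∧ g = fun y => eFun G x y + (l : EReal)}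
        with hSdef
      refine ⟨S, ?_, ?_⟩
      · rintro g ⟨x, l, hl, rfl⟩
        exact hG.2 _ (eFun_mem hG x) l
      · funext y
        apply le_antisymm
        · refine le_iInf₂ ?_
          rintro g ⟨x, l, hl, rfl⟩
          calc (⨅ x, tadd (eFun G x y) (w x)) ≤ tadd (eFun G x y) (w x) := iInf_le _ x
            _ ≤ tadd (eFun G x y) (l : EReal) := tadd_mono_right _ hl
            _ = eFun G x y + (l : EReal) := tadd_coe _ l
        · refine le_iInf fun x => ?_
          rcases ereal3 (w x) with hwx | hwx | ⟨r, hwx⟩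
          · rw [hwx, tadd_top]; exact le_top
          · by_cases he : eFun G x y = ⊤
            · rw [he, top_tadd]; exact le_top
            · have hmem : ∀ l : ℝ, (fun z => eFun G x z + (l : EReal)) ∈ S := fun l =>
                ⟨x, l, by rw [hwx]; exact bot_le, rfl⟩
              have hle : ∀ l : ℝ, (⨅ g ∈ S, g y) ≤ eFun G x y + (l : EReal) := fun l =>
                iInf₂_le _ (hmem l)
              have hb : (⨅ g ∈ S, g y) = ⊥ := by
                rcases ereal3 (eFun G x y) with h' | h' | ⟨s, hs⟩
                · exact absurd h' he
                · have := hle 0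
                  rw [h', EReal.bot_add] at this
                  exact le_bot_iff.1 this
                · rw [EReal.eq_bot_iff_forall_lt]
                  intro t
                  refine lt_of_le_of_lt (hle (t - s - 1)) ?_
                  rw [hs, ← EReal.coe_add, EReal.coe_lt_coe_iff]
                  linarith
              rw [hb]
              exact bot_le
          · have hmem : (fun z => eFun G x z + (r : EReal)) ∈ S :=
              ⟨x, r, le_of_eq hwx, rfl⟩
            calc (⨅ g ∈ S, g y) ≤ eFun G x y + (r : EReal) := iInf₂_le _ hmem
              _ = tadd (eFun G x y) (r : EReal) := (tadd_coe _ r).symm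
              _ = tadd (eFun G x y) (w x) := by rw [hwx]
  · intro x
    funext z
    apply le_antisymm
    · by_contra hcon
      push_neg at hcon
      obtain ⟨t, h1, h2⟩ := EReal.exists_between_coe_real hcon
      obtain ⟨t', h3, h4⟩ := EReal.exists_between_coe_real h2
      set u : X → EReal := fun y => eFun G x y + ((t - t' : ℝ) : EReal) with hu
      have huG : u ∈ G := hG.2 _ (eFun_mem hG x) (t - t')
      have huI : u ∈ infClos G := mem_infClos_of_mem huG
      have hux : u x < 0 := by
        rw [hu]
        simp only [eFun_self hG hprop x, zero_add]
        rw [← EReal.coe_zero, EReal.coe_lt_coe_iff]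
        have : (t : EReal) < t' := h3
        rw [EReal.coe_lt_coe_iff] at this
        linarith
      have hsup : u z ≤ ⨆ u ∈ {u | u ∈ infClos G ∧ u x < 0}, u z :=
        le_iSup₂_of_le u ⟨huI, hux⟩ le_rfl
      have htu : (t : EReal) ≤ u z := by
        rw [hu]
        calc (t : EReal) = (t' : EReal) + ((t - t' : ℝ) : EReal) := by
              rw [← EReal.coe_add]; norm_num
          _ ≤ eFun G x z + ((t - t' : ℝ) : EReal) := add_le_add_left h4.le _
      exact absurd (htu.trans hsup) (not_le.2 h1)
    · refine iSup₂_le fun u hu => ?_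
      calc u z ≤ tadd (eFun G x z) (u x) := infClos_le_tadd hG hu.1 x z
        _ ≤ tadd (eFun G x z) 0 := tadd_mono_right _ hu.2.le
        _ = eFun G x z := tadd_zero _
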